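/- arXiv:2409.03732 — 2 statements merged into one kernel-verified Lean document; each statement's English description precedes it below -/
import Mathlib

section
/- For any partition X of Ω, the Shannon entropy H(X) = −Σ_{P ∈ X} p(P) log p(P) equals the sum of μ(S) over all atoms S crossed by X, i.e., H(X) = μ(ΔX) where ΔX := {S ⊆ Ω : |S| ≥ 2 and S is not contained in any single part of X}. -/
open Finset BigOperators

variable {Ω : Type*} [Fintype Ω] [DecidableEq Ω]

/-- Probability of a subset: `p(T) = Σ_{ω∈T} p(ω)`. -/
def pS (p : Ω → ℝ) (T : Finset Ω) : ℝ := ∑ ω ∈ T, p ω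

/-- `p(T) log p(T)` (with `0 log 0 = 0` since `Real.log 0 = 0`). -/
noncomputable def plog (p : Ω → ℝ) (T : Finset Ω) : ℝ := pS p T * Real.log (pS p T)

/-- The interior-loss measure of an atom `S`. -/
noncomputable def mu (p : Ω → ℝ) (S : Finset Ω) : ℝ :=
  ∑ T ∈ S.powerset.filter (· ≠ ∅), (-1 : ℝ) ^ (S.card - T.card) * plog p T

/-- `μ` of a set of atoms, extended additively. -/
noncomputable def muSet (p : Ω → ℝ) (R : Finset (Finset Ω)) : ℝ := ∑ S ∈ R, mu p S

/-- A partition `X` crosses an atom `S` when `S` meets at least two distinct parts. -/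
def crossed (X : Finpartition (univ : Finset Ω)) (S : Finset Ω) : Prop :=
  ∃ P ∈ X.parts, ∃ Q ∈ X.parts, P ≠ Q ∧ (S ∩ P).Nonempty ∧ (S ∩ Q).Nonempty

open scoped Classical in
/-- The content `ΔX`: set of atoms crossed by the partition `X`. -/
noncomputable def content (X : Finpartition (univ : Finset Ω)) : Finset (Finset Ω) :=
  (univ : Finset (Finset Ω)).filter (fun S => 2 ≤ S.card ∧ crossed X S)

/-- Shannon entropy of a partition. -/
noncomputable def Hent (p : Ω → ℝ) (X : Finpartition (univ : Finset Ω)) : ℝ :=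
  - ∑ P ∈ X.parts, pS p P * Real.log (pS p P)

/-- `X` refines `Z`: every part of `X` lies in a part of `Z`. -/
def refines (X Z : Finpartition (univ : Finset Ω)) : Prop :=
  ∀ P ∈ X.parts, ∃ Q ∈ Z.parts, P ⊆ Q

set_option linter.unusedSectionVars false
set_option linter.unusedVariables false

lemma real_sum_powerset_neg_one_pow_card (x : Finset Ω) :
    (∑ m ∈ x.powerset, (-1 : ℝ) ^ m.card) = if x = ∅ then 1 else 0 := by
  have h := Finset.sum_powerset_neg_one_pow_card (x := x)
  calc (∑ m ∈ x.powerset, (-1 : ℝ) ^ m.card)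
      = ((∑ m ∈ x.powerset, (-1 : ℤ) ^ m.card : ℤ) : ℝ) := by push_cast; rfl
    _ = _ := by rw [h]; split <;> simp

lemma inner_alt_sum (A T : Finset Ω) (hTA : T ⊆ A) :
    ∑ S ∈ A.powerset.filter (fun S => T ⊆ S), (-1 : ℝ) ^ (S.card - T.card)
      = if T = A then 1 else 0 := by
  have key : ∑ S ∈ A.powerset.filter (fun S => T ⊆ S), (-1 : ℝ) ^ (S.card - T.card)
      = ∑ U ∈ (A \ T).powerset, (-1 : ℝ) ^ U.card := by
    refine Finset.sum_nbij' (fun S => S \ T) (fun U => U ∪ T) ?_ ?_ ?_ ?_ ?_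
    · intro S hS
      simp only [mem_filter, mem_powerset] at hS ⊢
      exact sdiff_subset_sdiff hS.1 Subset.rfl
    · intro U hU
      simp only [mem_filter, mem_powerset] at hU ⊢
      exact ⟨union_subset (hU.trans sdiff_subset) hTA, subset_union_right⟩
    · intro S hS
      simp only [mem_filter, mem_powerset] at hS
      exact sdiff_union_of_subset hS.2
    · intro U hU
      simp only [mem_powerset] at hU
      have hd : Disjoint U T := (subset_sdiff.mp hU).2
      show (U ∪ T) \ T = U
      rw [union_sdiff_right, sdiff_eq_self_of_disjoint hd]
    · intro S hS
      simp only [mem_filter, mem_powerset] at hS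
      congr 1
      rw [card_sdiff_of_subset hS.2]
  rw [key, real_sum_powerset_neg_one_pow_card]
  congr 1
  simp only [sdiff_eq_empty_iff_subset, eq_iff_iff]
  exact ⟨fun h => (h.antisymm hTA).symm, fun h => h ▸ Subset.rfl⟩

lemma sum_mu_powerset (p : Ω → ℝ) (A : Finset Ω) :
    ∑ S ∈ A.powerset, mu p S = plog p A := by
  rcases eq_or_ne A ∅ with rfl | hA
  · simp [mu, plog, pS, Finset.filter_singleton]
  unfold mu
  rw [Finset.sum_comm' (t' := A.powerset.filter (· ≠ ∅))
      (s' := fun T => A.powerset.filter (fun S => T ⊆ S))]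
  · have hterm : ∀ T ∈ A.powerset.filter (· ≠ ∅),
        ∑ S ∈ A.powerset.filter (fun S => T ⊆ S), (-1 : ℝ) ^ (S.card - T.card) * plog p T
          = (if T = A then 1 else 0) * plog p T := by
      intro T hT
      rw [← Finset.sum_mul, inner_alt_sum]
      exact mem_powerset.mp (mem_filter.mp hT).1
    rw [Finset.sum_congr rfl hterm]
    have hA_mem : A ∈ A.powerset.filter (· ≠ ∅) := by simp [hA]
    rw [Finset.sum_eq_single_of_mem A hA_mem]
    · simp
    · intro b _ hb; simp [hb]
  · intro S T
    simp only [mem_filter, mem_powerset]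
    constructor
    · rintro ⟨hSA, hTS, hT⟩
      exact ⟨⟨hSA, hTS⟩, hTS.trans hSA, hT⟩
    · rintro ⟨⟨hSA, hTS⟩, _, hT⟩
      exact ⟨hSA, hTS, hT⟩

lemma sum_mu_ne_empty (p : Ω → ℝ) (A : Finset Ω) :
    ∑ S ∈ A.powerset.filter (· ≠ ∅), mu p S = plog p A := by
  have h := sum_mu_powerset p A
  rw [← Finset.sum_filter_add_sum_filter_not A.powerset (· ≠ ∅) (mu p)] at h
  have h0 : ∑ S ∈ A.powerset.filter (fun S => ¬ S ≠ ∅), mu p S = 0 :=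
    Finset.sum_eq_zero fun S hS => by
      simp only [mem_filter, not_not] at hS
      rw [hS.2]; simp [mu, Finset.filter_singleton]
  rw [h0, add_zero] at h
  exact h

theorem entropy_eq_muSet_content {Ω : Type*} [Fintype Ω] [DecidableEq Ω] (p : Ω → ℝ)
    (hp : ∀ ω, 0 ≤ p ω) (hsum : ∑ ω, p ω = 1)
    (X : Finpartition (univ : Finset Ω)) :
    Hent p X = muSet p (content X) := by
  classical
  set N : Finset (Finset Ω) := (univ : Finset Ω).powerset.filter (· ≠ ∅) with hN
  have htotal : ∑ S ∈ N, mu p S = 0 := by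
    have h1 := sum_mu_ne_empty p (univ : Finset Ω)
    have hplog : plog p (univ : Finset Ω) = 0 := by simp [plog, pS, hsum]
    rw [hplog] at h1
    exact h1
  have hsplit : ∑ S ∈ N, mu p S
      = ∑ S ∈ N.filter (crossed X), mu p S + ∑ S ∈ N.filter (fun S => ¬ crossed X S), mu p S :=
    (Finset.sum_filter_add_sum_filter_not N _ _).symm
  have hcontent : N.filter (crossed X) = content X := by
    ext S
    simp only [hN, content, mem_filter, mem_powerset, mem_univ, true_and, filter_filter,
      Finset.subset_univ]
    constructor
    · rintro ⟨hne, hc⟩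
      refine ⟨?_, hc⟩
      obtain ⟨P, hP, Q, hQ, hPQ, ⟨a, ha⟩, ⟨b, hb⟩⟩ := hc
      simp only [mem_inter] at ha hb
      have hab : a ≠ b := by
        rintro rfl
        exact hPQ (X.eq_of_mem_parts hP hQ ha.2 hb.2)
      exact Finset.one_lt_card.mpr ⟨a, ha.1, b, hb.1, hab⟩
    · rintro ⟨h2, hc⟩
      refine ⟨?_, hc⟩
      intro h; subst h; simp at h2
  have huncrossed : N.filter (fun S => ¬ crossed X S)
      = X.parts.biUnion (fun P => P.powerset.filter (· ≠ ∅)) := by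
    ext S
    simp only [hN, mem_filter, mem_powerset, mem_biUnion, filter_filter, Finset.subset_univ,
      true_and]
    constructor
    · rintro ⟨hne, hnc⟩
      obtain ⟨ω, hω⟩ := Finset.nonempty_iff_ne_empty.mpr hne
      obtain ⟨P, hP, hωP⟩ := X.exists_mem (Finset.mem_univ ω)
      refine ⟨P, hP, ?_, hne⟩
      intro x hx
      obtain ⟨Q, hQ, hxQ⟩ := X.exists_mem (Finset.mem_univ x)
      by_cases hPQ : Q = P
      · exact hPQ ▸ hxQ
      · exact absurd ⟨P, hP, Q, hQ, (Ne.symm hPQ), ⟨ω, mem_inter.mpr ⟨hω, hωP⟩⟩,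
          ⟨x, mem_inter.mpr ⟨hx, hxQ⟩⟩⟩ hnc
    · rintro ⟨P, hP, hSP, hne⟩
      refine ⟨hne, ?_⟩
      rintro ⟨P1, hP1, P2, hP2, h12, ⟨a, ha⟩, ⟨b, hb⟩⟩
      simp only [mem_inter] at ha hb
      have e1 : P1 = P := X.eq_of_mem_parts hP1 hP ha.2 (hSP ha.1)
      have e2 : P2 = P := X.eq_of_mem_parts hP2 hP hb.2 (hSP hb.1)
      exact h12 (e1.trans e2.symm)
  have hdisj : ∀ P ∈ X.parts, ∀ Q ∈ X.parts, P ≠ Q →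
      Disjoint (P.powerset.filter (· ≠ ∅)) (Q.powerset.filter (· ≠ ∅)) := by
    intro P hP Q hQ hPQ
    rw [Finset.disjoint_left]
    intro S hSP hSQ
    simp only [mem_filter, mem_powerset] at hSP hSQ
    obtain ⟨a, ha⟩ := Finset.nonempty_iff_ne_empty.mpr hSP.2
    exact hPQ (X.eq_of_mem_parts hP hQ (hSP.1 ha) (hSQ.1 ha))
  have hsum2 : ∑ S ∈ N.filter (fun S => ¬ crossed X S), mu p S
      = ∑ P ∈ X.parts, plog p P := by
    rw [huncrossed, Finset.sum_biUnion hdisj]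
    exact Finset.sum_congr rfl fun P _ => sum_mu_ne_empty p P
  rw [hsplit, hcontent, hsum2] at htotal
  unfold Hent muSet
  have hre : ∑ P ∈ X.parts, plog p P = ∑ P ∈ X.parts, pS p P * Real.log (pS p P) := rfl
  linarith [htotal, hre]
end

section
/- The Gács–Körner common information of partitions X and Y, defined as the maximum of H(Z) over partitions Z refined by both X and Y, equals μ(Rep(ΔX ∩ ΔY)), the measure of the maximal representable subset of ΔX ∩ ΔY. -/
open Finset BigOperators

variable {Ω : Type*} [Fintype Ω] [DecidableEq Ω]

section Aux
open scoped Classical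

lemma plog_empty (p : Ω → ℝ) : plog p ∅ = 0 := by simp [plog, pS]

lemma mu_empty (p : Ω → ℝ) : mu p ∅ = 0 := by
  simp [mu, Finset.powerset_empty, Finset.filter_singleton]

lemma neg_one_pow_sum (s : Finset Ω) :
    (∑ V ∈ s.powerset, (-1 : ℝ) ^ V.card) = if s = ∅ then 1 else 0 := by
  have : ((∑ V ∈ s.powerset, (-1 : ℤ) ^ V.card : ℤ) : ℝ)
      = ∑ V ∈ s.powerset, (-1 : ℝ) ^ V.card := by push_cast; ring
  rw [← this, Finset.sum_powerset_neg_one_pow_card]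
  split <;> norm_num

/-- Möbius inversion: the sum of `mu` over all subsets of `S` recovers `plog S`. -/
lemma mobius_sum (p : Ω → ℝ) (S : Finset Ω) :
    ∑ T ∈ S.powerset, mu p T = plog p S := by
  have h1 : ∀ T ∈ S.powerset, mu p T =
      ∑ U ∈ S.powerset.filter (· ≠ ∅),
        (if U ⊆ T then (-1 : ℝ) ^ (T.card - U.card) * plog p U else 0) := by
    intro T hT
    rw [Finset.mem_powerset] at hT
    rw [← Finset.sum_filter, mu]
    congr 1
    ext U
    simp only [Finset.mem_filter, Finset.mem_powerset]
    constructor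
    · rintro ⟨hUT, hU⟩; exact ⟨⟨hUT.trans hT, hU⟩, hUT⟩
    · rintro ⟨⟨_, hU⟩, hUT⟩; exact ⟨hUT, hU⟩
  rw [Finset.sum_congr rfl h1, Finset.sum_comm]
  have h2 : ∀ U ∈ S.powerset.filter (· ≠ ∅),
      (∑ T ∈ S.powerset, if U ⊆ T then (-1 : ℝ) ^ (T.card - U.card) * plog p U else 0)
      = if U = S then plog p S else 0 := by
    intro U hU
    simp only [Finset.mem_filter, Finset.mem_powerset] at hU
    obtain ⟨hUS, _⟩ := hU
    rw [← Finset.sum_filter]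
    have key : ∑ T ∈ S.powerset.filter (U ⊆ ·), (-1 : ℝ) ^ (T.card - U.card) * plog p U
        = (∑ V ∈ (S \ U).powerset, (-1 : ℝ) ^ V.card) * plog p U := by
      rw [Finset.sum_mul]
      refine Finset.sum_bij' (fun T _ => T \ U) (fun V _ => V ∪ U) ?_ ?_ ?_ ?_ ?_
      · intro T hT
        simp only [Finset.mem_filter, Finset.mem_powerset] at hT ⊢
        exact Finset.sdiff_subset_sdiff hT.1 le_rfl
      · intro V hV
        simp only [Finset.mem_filter, Finset.mem_powerset] at hV ⊢
        constructor
        · exact Finset.union_subset (hV.trans (Finset.sdiff_subset)) hUS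
        · exact Finset.subset_union_right
      · intro T hT
        simp only [Finset.mem_filter, Finset.mem_powerset] at hT
        exact Finset.sdiff_union_of_subset hT.2
      · intro V hV
        simp only [Finset.mem_powerset] at hV
        have hdisj : Disjoint V U := Finset.disjoint_of_subset_left hV Finset.sdiff_disjoint
        show (V ∪ U) \ U = V
        rw [Finset.union_sdiff_cancel_right hdisj]
      · intro T hT
        simp only [Finset.mem_filter, Finset.mem_powerset] at hT
        congr 2
        rw [Finset.card_sdiff_of_subset hT.2]
    rw [key, neg_one_pow_sum]
    by_cases h : U = S
    · subst h; simp
    · have : S \ U ≠ ∅ := by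
        rw [Ne, Finset.sdiff_eq_empty_iff_subset]
        intro hSU
        exact h (Finset.Subset.antisymm hUS hSU)
      rw [if_neg this, if_neg h, zero_mul]
  rw [Finset.sum_congr rfl h2, Finset.sum_ite_eq' (S.powerset.filter (· ≠ ∅)) S]
  by_cases hS : S = ∅
  · subst hS; simp [plog_empty]
  · rw [if_pos]
    simp only [Finset.mem_filter, Finset.mem_powerset]
    exact ⟨Finset.Subset.refl S, hS⟩

lemma two_le_card_of_crossed {Z : Finpartition (univ : Finset Ω)} {S : Finset Ω}
    (h : crossed Z S) : 2 ≤ S.card := by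
  obtain ⟨P, hP, Q, hQ, hPQ, ⟨a, ha⟩, ⟨b, hb⟩⟩ := h
  rw [Finset.mem_inter] at ha hb
  have hab : a ≠ b := by
    rintro rfl
    have hm : a ∈ P ⊓ Q := by rw [Finset.inf_eq_inter]; exact Finset.mem_inter.mpr ⟨ha.2, hb.2⟩
    have : a ∈ (⊥ : Finset Ω) := (Z.disjoint hP hQ hPQ).le_bot hm
    simp at this
  exact Finset.one_lt_card.mpr ⟨a, ha.1, b, hb.1, hab⟩

lemma content_eq (Z : Finpartition (univ : Finset Ω)) :
    content Z = (univ : Finset (Finset Ω)).filter (fun S => crossed Z S) := by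
  ext S
  simp only [content, Finset.mem_filter, Finset.mem_univ, true_and]
  exact ⟨fun h => h.2, fun h => ⟨two_le_card_of_crossed h, h⟩⟩

lemma not_crossed_iff {Z : Finpartition (univ : Finset Ω)} {T : Finset Ω}
    (hT : T.Nonempty) : ¬ crossed Z T ↔ ∃ P ∈ Z.parts, T ⊆ P := by
  constructor
  · intro h
    obtain ⟨a, ha⟩ := hT
    obtain ⟨P, hP, haP⟩ := Z.exists_mem (Finset.mem_univ a)
    refine ⟨P, hP, fun b hb => ?_⟩
    by_contra hbP
    obtain ⟨Q, hQ, hbQ⟩ := Z.exists_mem (Finset.mem_univ b)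
    exact h ⟨P, hP, Q, hQ, fun hPQ => hbP (hPQ ▸ hbQ),
      ⟨a, Finset.mem_inter.mpr ⟨ha, haP⟩⟩, ⟨b, Finset.mem_inter.mpr ⟨hb, hbQ⟩⟩⟩
  · rintro ⟨P, hP, hTP⟩ ⟨P1, hP1, P2, hP2, h12, ⟨a, ha⟩, ⟨b, hb⟩⟩
    rw [Finset.mem_inter] at ha hb
    have e1 : P1 = P := Z.eq_of_mem_parts hP1 hP ha.2 (hTP ha.1)
    have e2 : P2 = P := Z.eq_of_mem_parts hP2 hP hb.2 (hTP hb.1)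
    exact h12 (e1.trans e2.symm)

lemma Hent_eq_muSet (p : Ω → ℝ) (hsum : ∑ ω, p ω = 1)
    (Z : Finpartition (univ : Finset Ω)) : Hent p Z = muSet p (content Z) := by
  have huniv : (univ : Finset (Finset Ω)) = (univ : Finset Ω).powerset := by
    ext T; simp
  have h0 : ∑ T ∈ (univ : Finset (Finset Ω)), mu p T = 0 := by
    rw [huniv, mobius_sum, plog]
    have : pS p (univ : Finset Ω) = 1 := hsum
    rw [this]; simp
  have hsplit := Finset.sum_filter_add_sum_filter_not (univ : Finset (Finset Ω))
    (fun S => crossed Z S) (mu p)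
  have hnc : ∑ S ∈ (univ : Finset (Finset Ω)).filter (fun S => ¬ crossed Z S), mu p S
      = ∑ P ∈ Z.parts, plog p P := by
    have hset : (univ : Finset (Finset Ω)).filter (fun S => ¬ crossed Z S)
        = insert ∅ (Z.parts.biUnion (fun P => P.powerset.filter (· ≠ ∅))) := by
      ext T
      simp only [Finset.mem_filter, Finset.mem_univ, true_and, Finset.mem_insert,
        Finset.mem_biUnion, Finset.mem_powerset]
      constructor
      · intro h
        rcases eq_or_ne T ∅ with rfl | hTne
        · exact Or.inl rfl
        · obtain ⟨P, hP, hTP⟩ := (not_crossed_iff (Finset.nonempty_of_ne_empty hTne)).mp h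
          exact Or.inr ⟨P, hP, hTP, hTne⟩
      · rintro (rfl | ⟨P, hP, hTP, hTne⟩)
        · rintro ⟨P1, hP1, P2, hP2, h12, ⟨a, ha⟩, _⟩
          simp at ha
        · exact (not_crossed_iff (Finset.nonempty_of_ne_empty hTne)).mpr ⟨P, hP, hTP⟩
    rw [hset, Finset.sum_insert, Finset.sum_biUnion]
    · rw [mu_empty, zero_add]
      refine Finset.sum_congr rfl fun P _ => ?_
      have := Finset.sum_filter_add_sum_filter_not P.powerset (· ≠ ∅) (mu p)
      rw [mobius_sum] at this
      have h2 : ∑ T ∈ P.powerset.filter (fun T => ¬ T ≠ ∅), mu p T = 0 := by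
        have : P.powerset.filter (fun T => ¬ T ≠ ∅) = {∅} := by
          ext T; simp only [Finset.mem_filter, Finset.mem_powerset, not_not,
            Finset.mem_singleton]
          constructor
          · rintro ⟨_, rfl⟩; rfl
          · rintro rfl; exact ⟨Finset.empty_subset P, rfl⟩
        rw [this, Finset.sum_singleton, mu_empty]
      linarith
    · intro P hP Q hQ hPQ
      refine Finset.disjoint_left.mpr fun T hT1 hT2 => ?_
      simp only [Finset.mem_filter, Finset.mem_powerset] at hT1 hT2
      have hbot : P ⊓ Q = ⊥ := disjoint_iff.mp (Z.disjoint hP hQ hPQ)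
      have hTbot : T ≤ (⊥ : Finset Ω) := le_trans (le_inf hT1.1 hT2.1) hbot.le
      rw [le_bot_iff] at hTbot
      exact hT1.2 hTbot
    · intro hmem
      simp only [Finset.mem_biUnion, Finset.mem_filter] at hmem
      obtain ⟨P, hP, _, h⟩ := hmem
      exact h rfl
  have hc : ∑ S ∈ (univ : Finset (Finset Ω)).filter (fun S => crossed Z S), mu p S
      = muSet p (content Z) := by
    rw [muSet, content_eq]
  rw [Hent, ← hc]
  have : ∑ P ∈ Z.parts, pS p P * Real.log (pS p P) = ∑ P ∈ Z.parts, plog p P := rfl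
  rw [this]
  linarith [hsplit, h0, hnc]

lemma content_subset_of_refines {X Z : Finpartition (univ : Finset Ω)}
    (h : refines X Z) : content Z ⊆ content X := by
  intro S hS
  rw [content_eq] at hS ⊢
  simp only [Finset.mem_filter, Finset.mem_univ, true_and] at hS ⊢
  obtain ⟨P, hP, Q, hQ, hPQ, ⟨a, ha⟩, ⟨b, hb⟩⟩ := hS
  rw [Finset.mem_inter] at ha hb
  obtain ⟨Pa, hPa, haPa⟩ := X.exists_mem (Finset.mem_univ a)
  obtain ⟨Pb, hPb, hbPb⟩ := X.exists_mem (Finset.mem_univ b)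
  obtain ⟨Qa, hQa, hPaQa⟩ := h Pa hPa
  obtain ⟨Qb, hQb, hPbQb⟩ := h Pb hPb
  have eQa : Qa = P := Z.eq_of_mem_parts hQa hP (hPaQa haPa) ha.2
  have eQb : Qb = Q := Z.eq_of_mem_parts hQb hQ (hPbQb hbPb) hb.2
  refine ⟨Pa, hPa, Pb, hPb, ?_, ⟨a, Finset.mem_inter.mpr ⟨ha.1, haPa⟩⟩,
    ⟨b, Finset.mem_inter.mpr ⟨hb.1, hbPb⟩⟩⟩
  rintro rfl
  exact hPQ (eQa ▸ eQb ▸ (Z.eq_of_mem_parts hQa hQb (hPaQa haPa) (hPbQb haPa)))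

lemma refines_of_content_subset {X Z : Finpartition (univ : Finset Ω)}
    (h : content Z ⊆ content X) : refines X Z := by
  intro P hP
  obtain ⟨ω, hω⟩ := X.nonempty_of_mem_parts hP
  obtain ⟨Q, hQ, hωQ⟩ := Z.exists_mem (Finset.mem_univ ω)
  refine ⟨Q, hQ, fun ω' hω' => ?_⟩
  by_contra hω'Q
  obtain ⟨Q', hQ', hω'Q'⟩ := Z.exists_mem (Finset.mem_univ ω')
  have hQQ' : Q ≠ Q' := by rintro rfl; exact hω'Q hω'Q'
  have hcross : crossed Z {ω, ω'} := by
    refine ⟨Q, hQ, Q', hQ', hQQ', ⟨ω, ?_⟩, ⟨ω', ?_⟩⟩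
    · simp [hωQ]
    · simp [hω'Q']
  have hmem : ({ω, ω'} : Finset Ω) ∈ content Z := by
    rw [content_eq]
    simp only [Finset.mem_filter, Finset.mem_univ, true_and]
    exact hcross
  have := h hmem
  rw [content_eq] at this
  simp only [Finset.mem_filter, Finset.mem_univ, true_and] at this
  obtain ⟨P1, hP1, P2, hP2, h12, ⟨a, ha⟩, ⟨b, hb⟩⟩ := this
  rw [Finset.mem_inter] at ha hb
  have haP : a ∈ P := by
    rcases Finset.mem_insert.mp ha.1 with rfl | h'
    · exact hω
    · exact (Finset.mem_singleton.mp h') ▸ hω'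
  have hbP : b ∈ P := by
    rcases Finset.mem_insert.mp hb.1 with rfl | h'
    · exact hω
    · exact (Finset.mem_singleton.mp h') ▸ hω'
  have e1 : P1 = P := X.eq_of_mem_parts hP1 hP ha.2 haP
  have e2 : P2 = P := X.eq_of_mem_parts hP2 hP hb.2 hbP
  exact h12 (e1.trans e2.symm)

lemma superadd {ι : Type*} (s : Finset ι) (g : ι → ℝ) (hg : ∀ i ∈ s, 0 ≤ g i) :
    ∑ i ∈ s, g i * Real.log (g i)
      ≤ (∑ i ∈ s, g i) * Real.log (∑ i ∈ s, g i) := by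
  rw [Finset.sum_mul]
  refine Finset.sum_le_sum fun i hi => ?_
  rcases eq_or_lt_of_le (hg i hi) with h0 | h0
  · simp [← h0]
  · have hle : g i ≤ ∑ j ∈ s, g j := Finset.single_le_sum hg hi
    exact mul_le_mul_of_nonneg_left (Real.log_le_log h0 hle) (hg i hi)

lemma Hent_le (p : Ω → ℝ) (hp : ∀ ω, 0 ≤ p ω) {W Z : Finpartition (univ : Finset Ω)}
    (h : refines W Z) : Hent p Z ≤ Hent p W := by
  rw [Hent, Hent, neg_le_neg_iff]
  have key : W.parts = Z.parts.biUnion (fun Q => W.parts.filter (· ⊆ Q)) := by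
    ext P
    simp only [Finset.mem_biUnion, Finset.mem_filter]
    constructor
    · intro hP
      obtain ⟨Q, hQ, hPQ⟩ := h P hP
      exact ⟨Q, hQ, hP, hPQ⟩
    · rintro ⟨Q, _, hP, _⟩; exact hP
  have hdisj : ∀ Q1 ∈ Z.parts, ∀ Q2 ∈ Z.parts, Q1 ≠ Q2 →
      Disjoint (W.parts.filter (· ⊆ Q1)) (W.parts.filter (· ⊆ Q2)) := by
    intro Q1 hQ1 Q2 hQ2 h12
    refine Finset.disjoint_left.mpr fun P hP1 hP2 => ?_
    simp only [Finset.mem_filter] at hP1 hP2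
    obtain ⟨ω, hω⟩ := W.nonempty_of_mem_parts hP1.1
    exact h12 (Z.eq_of_mem_parts hQ1 hQ2 (hP1.2 hω) (hP2.2 hω))
  rw [key, Finset.sum_biUnion hdisj]
  refine Finset.sum_le_sum fun Q hQ => ?_
  have hQeq : Q = (W.parts.filter (· ⊆ Q)).biUnion id := by
    ext ω
    simp only [Finset.mem_biUnion, Finset.mem_filter, id]
    constructor
    · intro hω
      obtain ⟨P, hP, hωP⟩ := W.exists_mem (Finset.mem_univ ω)
      obtain ⟨Q', hQ', hPQ'⟩ := h P hP
      have : Q' = Q := Z.eq_of_mem_parts hQ' hQ (hPQ' hωP) hω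
      exact ⟨P, ⟨hP, this ▸ hPQ'⟩, hωP⟩
    · rintro ⟨P, ⟨_, hPQ⟩, hωP⟩
      exact hPQ hωP
  have hdisjW : ∀ P1 ∈ (W.parts.filter (· ⊆ Q) : Set (Finset Ω)),
      ∀ P2 ∈ (W.parts.filter (· ⊆ Q) : Set (Finset Ω)), P1 ≠ P2 → Disjoint (id P1) (id P2) := by
    intro P1 hP1 P2 hP2 h12
    simp only [Finset.mem_coe, Finset.mem_filter] at hP1 hP2
    exact W.disjoint hP1.1 hP2.1 h12
  have hcover : pS p Q = ∑ P ∈ W.parts.filter (· ⊆ Q), pS p P := by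
    have h1 : pS p Q = ∑ ω ∈ (W.parts.filter (· ⊆ Q)).biUnion id, p ω := by
      rw [← hQeq]; rfl
    rw [h1, Finset.sum_biUnion hdisjW]
    rfl
  calc ∑ P ∈ W.parts.filter (· ⊆ Q), pS p P * Real.log (pS p P)
      ≤ (∑ P ∈ W.parts.filter (· ⊆ Q), pS p P)
          * Real.log (∑ P ∈ W.parts.filter (· ⊆ Q), pS p P) := by
        refine superadd _ _ fun P _ => Finset.sum_nonneg fun ω _ => hp ω
    _ = pS p Q * Real.log (pS p Q) := by rw [← hcover]

end Aux

theorem gacsKorner_eq_muSet_rep {Ω : Type*} [Fintype Ω] [DecidableEq Ω] (p : Ω → ℝ)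
    (hp : ∀ ω, 0 ≤ p ω) (hsum : ∑ ω, p ω = 1)
    (X Y : Finpartition (univ : Finset Ω))
    (W : Finpartition (univ : Finset Ω))
    (hW : content W ⊆ content X ∩ content Y)
    (hWmax : ∀ V : Finpartition (univ : Finset Ω),
        content V ⊆ content X ∩ content Y → content V ⊆ content W) :
    IsGreatest {h : ℝ | ∃ Z : Finpartition (univ : Finset Ω),
        refines X Z ∧ refines Y Z ∧ h = Hent p Z}
      (muSet p (content W)) := by
  constructor
  · refine ⟨W, refines_of_content_subset (fun S hS => (Finset.mem_inter.mp (hW hS)).1),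
      refines_of_content_subset (fun S hS => (Finset.mem_inter.mp (hW hS)).2),
      (Hent_eq_muSet p hsum W).symm⟩
  · rintro h ⟨Z, hX, hY, rfl⟩
    have h1 : content Z ⊆ content X ∩ content Y :=
      Finset.subset_inter (content_subset_of_refines hX) (content_subset_of_refines hY)
    have h3 : refines W Z := refines_of_content_subset (hWmax Z h1)
    calc Hent p Z ≤ Hent p W := Hent_le p hp h3
      _ = muSet p (content W) := Hent_eq_muSet p hsum W
end
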